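/- Let C ∈ (0,1) and L > 0 be fixed. Among all pairs (ρ, λ) with ρ, λ ∈ (0,1) satisfying C = (ρ + λ − 1)/(ρλ), the minimum of M = (1/ρ)(1 + L/λ) equals L(√(1−C) + √(1 + 1/L))². -/

import Mathlib

/-- The minimum of `M = (1/ρ)(1 + L/λ)` over `ρ, λ ∈ (0,1)` with
`C = (ρ + λ − 1)/(ρλ)` equals `L(√(1−C) + √(1 + 1/L))²`. -/
theorem stmt_0 (C L : ℝ) (hC : C ∈ Set.Ioo (0:ℝ) 1) (hL : 0 < L) :
    IsLeast { m : ℝ | ∃ ρ lam : ℝ, ρ ∈ Set.Ioo (0:ℝ) 1 ∧ lam ∈ Set.Ioo (0:ℝ) 1 ∧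
        C = (ρ + lam - 1) / (ρ * lam) ∧ m = (1 / ρ) * (1 + L / lam) }
      (L * (Real.sqrt (1 - C) + Real.sqrt (1 + 1 / L)) ^ 2) := by
  obtain ⟨hC0, hC1⟩ := hC
  set s := Real.sqrt (1 - C) with hs
  set t := Real.sqrt (1 + 1 / L) with ht
  have hs0 : 0 < s := Real.sqrt_pos.mpr (by linarith)
  have ht0 : 0 < t := Real.sqrt_pos.mpr (by positivity)
  have hs2 : s ^ 2 = 1 - C := Real.sq_sqrt (by linarith)
  have ht2 : t ^ 2 = 1 + 1 / L := Real.sq_sqrt (by positivity)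
  have ht2' : L * t ^ 2 = L + 1 := by
    rw [ht2]; field_simp
  have hst : 0 < s + t := by linarith
  have hp : 0 < 1 + s * t := by positivity
  constructor
  · -- membership: ρ = t/(s+t), lam = 1/(1+s*t)
    refine ⟨t / (s + t), 1 / (1 + s * t), ⟨by positivity, ?_⟩, ⟨by positivity, ?_⟩, ?_, ?_⟩
    · rw [div_lt_one hst]; linarith
    · rw [div_lt_one hp]; nlinarith
    · rw [eq_div_iff (by positivity)]
      field_simp
      nlinarith [hs2]
    · field_simp
      linear_combination ht2'
  · rintro m ⟨ρ, lam, ⟨hρ0, hρ1⟩, ⟨hl0, hl1⟩, hc, hm⟩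
    have hcl : 0 < 1 - C * lam := by nlinarith
    have hcon : ρ + lam - 1 = C * (ρ * lam) := by
      rw [eq_comm, div_eq_iff (by positivity)] at hc
      linarith
    have hρeq : ρ * (1 - C * lam) = 1 - lam := by nlinarith
    have hmv : m = (lam + L) / (ρ * lam) := by
      rw [hm]; field_simp
    rw [hmv, le_div_iff₀ (by positivity)]
    have key : L * ((1 + s * t) * lam - 1) ^ 2 =
        (lam + L) * (1 - C * lam) - L * (s + t) ^ 2 * lam * (1 - lam) := by
      have hC' : C = 1 - s ^ 2 := by linarith
      rw [hC']
      linear_combination (s ^ 2 * lam ^ 2 + lam * (1 - lam)) * ht2'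
    have h1 : L * (s + t) ^ 2 * (ρ * lam) * (1 - C * lam)
        = L * (s + t) ^ 2 * lam * (1 - lam) := by
      linear_combination (L * (s + t) ^ 2 * lam) * hρeq
    have h2 : L * (s + t) ^ 2 * lam * (1 - lam) ≤ (lam + L) * (1 - C * lam) := by
      nlinarith [mul_nonneg hL.le (sq_nonneg ((1 + s * t) * lam - 1))]
    have h3 : L * (s + t) ^ 2 * (ρ * lam) * (1 - C * lam) ≤ (lam + L) * (1 - C * lam) := by
      linarith
    exact le_of_mul_le_mul_right h3 hcl
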